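/- arXiv:2412.00075 — 2 statements merged into one kernel-verified Lean document; each statement's English description precedes it below -/
import Mathlib

section
/- Let u : ℝ → ℝ be C¹ with u' eventually monotone and |u'(t)| → ∞ as t → ±∞. Then for every ε > 0 and every k ∈ ℝ, the improper integral H_u(k,l) = lim_{S,T→∞} ∫_{-S}^{T} exp(i(kt − l·u(t))) dt converges uniformly in l on the set {l : |l| ≥ ε}. -/
open MeasureTheory Filter Complex Set Topology


lemma inner_piece {G G' : ℝ → ℂ} (hG : ∀ t, HasDerivAt G (G' t) t)
    (hG'c : Continuous G') (hGb : ∀ t, ‖G t‖ ≤ 1)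
    {a b : ℝ} {S : Set ℝ} (hS : S ⊆ Ioc a b) (hoc : S.OrdConnected) :
    ‖∫ t in S, G' t‖ ≤ 2 := by
  rcases S.eq_empty_or_nonempty with rfl | hne
  · simp
  · have hbdd : BddBelow S := ⟨a, fun x hx => (hS hx).1.le⟩
    have hbdd' : BddAbove S := ⟨b, fun x hx => (hS hx).2⟩
    set c := sInf S with hc
    set d := sSup S with hd
    have hcd : c ≤ d := csInf_le_csSup hne hbdd hbdd'
    have hsub1 : Ioo c d ⊆ S := by
      intro x hx
      obtain ⟨s1, hs1, hs1x⟩ := exists_lt_of_csInf_lt hne hx.1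
      obtain ⟨s2, hs2, hxs2⟩ := exists_lt_of_lt_csSup hne hx.2
      exact hoc.out hs1 hs2 ⟨hs1x.le, hxs2.le⟩
    have hsub2 : S ⊆ Icc c d := fun x hx => ⟨csInf_le hbdd hx, le_csSup hbdd' hx⟩
    have hae : S =ᵐ[volume] Ioc c d := by
      rw [MeasureTheory.ae_eq_set]
      constructor
      · refine measure_mono_null (fun x hx => ?_) (measure_singleton c)
        have h1 := hsub2 hx.1
        have : ¬ (c < x ∧ x ≤ d) := hx.2
        have : x = c := by
          rcases lt_or_eq_of_le h1.1 with h | h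
          · exact absurd ⟨h, h1.2⟩ this
          · exact h.symm
        simp [this]
      · refine measure_mono_null (fun x hx => ?_) (measure_singleton d)
        have h1 : x ∈ Ioc c d := hx.1
        have h2 : x ∉ S := hx.2
        have : x = d := by
          rcases lt_or_eq_of_le h1.2 with h | h
          · exact absurd (hsub1 ⟨h1.1, h⟩) h2
          · exact h
        simp [this]
    rw [setIntegral_congr_set hae]
    have : ∫ t in Ioc c d, G' t = ∫ t in c..d, G' t := by
      rw [intervalIntegral.integral_of_le hcd]
    rw [this, intervalIntegral.integral_eq_sub_of_hasDerivAt (fun t _ => hG t)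
      (hG'c.intervalIntegrable c d)]
    calc ‖G d - G c‖ ≤ ‖G d‖ + ‖G c‖ := norm_sub_le _ _
    _ ≤ 2 := by linarith [hGb d, hGb c]

lemma lemA {G G' : ℝ → ℂ} (hG : ∀ t, HasDerivAt G (G' t) t)
    (hG'c : Continuous G') (hGb : ∀ t, ‖G t‖ ≤ 1)
    {g : ℝ → ℝ} (hgm : Measurable g) {a b M : ℝ} (hab : a ≤ b) (hM : 0 ≤ M)
    (hg0 : ∀ t ∈ Ioc a b, g t ∈ Icc 0 M)
    (hqc : ∀ t1 t2 t, t1 ∈ Ioc a b → t2 ∈ Ioc a b → t1 ≤ t → t ≤ t2 →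
      min (g t1) (g t2) ≤ g t) :
    ‖∫ t in Ioc a b, g t • G' t‖ ≤ 2 * M := by
  -- rewrite integrand via layer cake
  have key : ∀ t ∈ Ioc a b, g t • G' t
      = ∫ y in Ioo 0 M, (Ioo 0 M ∩ Iio (g t)).indicator (fun _ => G' t) y := by
    intro t ht
    have h1 : Ioo 0 M ∩ Iio (g t) = Ioo 0 (g t) := by
      ext y
      constructor
      · rintro ⟨⟨h1, h2⟩, h3⟩; exact ⟨h1, h3⟩
      · rintro ⟨h1, h2⟩; exact ⟨⟨h1, lt_of_lt_of_le h2 (hg0 t ht).2⟩, h2⟩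
    rw [integral_indicator (by measurability), Measure.restrict_restrict (by measurability),
      inter_comm, h1, setIntegral_const]
    have h2 : Ioo 0 M ∩ Ioo 0 (g t) = Ioo 0 (g t) := by
      apply inter_eq_self_of_subset_right
      exact Ioo_subset_Ioo le_rfl (hg0 t ht).2
    rw [h2, measureReal_def, Real.volume_Ioo]
    rw [ENNReal.toReal_ofReal (by linarith [(hg0 t ht).1])]
    ring_nf
  rw [setIntegral_congr_fun measurableSet_Ioc key]
  -- Fubini
  have hC : ∃ C, ∀ t ∈ Icc a b, ‖G' t‖ ≤ C :=
    isCompact_Icc.exists_bound_of_continuousOn hG'c.continuousOn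
  obtain ⟨C, hC⟩ := hC
  have hmeas : AEStronglyMeasurable
      (Function.uncurry fun t y => (Ioo 0 M ∩ Iio (g t)).indicator (fun _ => G' t) y)
      ((volume.restrict (Ioc a b)).prod (volume.restrict (Ioo 0 M))) := by
    have hset : MeasurableSet {p : ℝ × ℝ | p.2 ∈ Ioo 0 M ∩ Iio (g p.1)} := by
      apply MeasurableSet.inter
      · exact measurable_snd measurableSet_Ioo
      · exact measurableSet_lt measurable_snd (hgm.comp measurable_fst)
    have : (Function.uncurry fun t y => (Ioo 0 M ∩ Iio (g t)).indicator (fun _ => G' t) y)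
        = {p : ℝ × ℝ | p.2 ∈ Ioo 0 M ∩ Iio (g p.1)}.indicator (fun p => G' p.1) := by
      ext ⟨t, y⟩
      simp [Function.uncurry, Set.indicator_apply, Set.mem_setOf_eq]
    rw [this]
    exact ((hG'c.measurable.comp measurable_fst).aemeasurable.indicator hset).aestronglyMeasurable
      |>.congr (by simp [Set.indicator_apply]; rfl)
  have hC : ∃ C, 0 ≤ C ∧ ∀ t ∈ Icc a b, ‖G' t‖ ≤ C := by
    obtain ⟨C, hC⟩ := (isCompact_Icc (a := a) (b := b)).exists_bound_of_continuousOn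
      hG'c.continuousOn
    exact ⟨C, le_trans (norm_nonneg _) (hC a ⟨le_rfl, hab⟩), hC⟩
  obtain ⟨C, hC0, hCb⟩ := hC
  have hint : Integrable
      (Function.uncurry fun t y => (Ioo 0 M ∩ Iio (g t)).indicator (fun _ => G' t) y)
      ((volume.restrict (Ioc a b)).prod (volume.restrict (Ioo 0 M))) := by
    apply Integrable.mono' (integrable_const C) hmeas
    rw [Measure.prod_restrict, ae_restrict_iff' (measurableSet_Ioc.prod measurableSet_Ioo)]
    refine ae_of_all _ ?_
    rintro ⟨t, y⟩ ⟨ht, hy⟩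
    show ‖(Ioo 0 M ∩ Iio (g t)).indicator (fun _ => G' t) y‖ ≤ C
    exact le_trans (norm_indicator_le_norm_self _ _) (hCb t (Ioc_subset_Icc_self ht))
  rw [integral_integral_swap hint]
  have hvol : (volume (Ioo (0:ℝ) M)).toReal = M := by
    rw [Real.volume_Ioo, ENNReal.toReal_ofReal (by linarith)]
    ring
  have hbound : ∀ y ∈ Ioo (0:ℝ) M,
      ‖∫ t in Ioc a b, (Ioo 0 M ∩ Iio (g t)).indicator (fun _ => G' t) y‖ ≤ 2 := by
    intro y hy
    have heq : ∀ t, (Ioo 0 M ∩ Iio (g t)).indicator (fun _ => G' t) y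
        = {t' : ℝ | y < g t'}.indicator G' t := by
      intro t
      simp only [Set.indicator_apply, Set.mem_inter_iff, Set.mem_Ioo, Set.mem_Iio,
        Set.mem_setOf_eq]
      by_cases h : y < g t
      · simp [h, hy.1, hy.2]
      · simp [h]
    simp only [heq]
    rw [setIntegral_indicator (measurableSet_lt measurable_const hgm)]
    refine inner_piece hG hG'c hGb (a := a) (b := b) inter_subset_left ?_
    constructor
    rintro x ⟨hx1, hx2⟩ z ⟨hz1, hz2⟩ w hw
    refine ⟨Set.ordConnected_Ioc.out hx1 hz1 hw, ?_⟩
    have := hqc x z w hx1 hz1 hw.1 hw.2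
    simp only [Set.mem_setOf_eq] at hx2 hz2 ⊢
    exact lt_of_lt_of_le (lt_min hx2 hz2) this
  calc ‖∫ y in Ioo 0 M, ∫ t in Ioc a b, (Ioo 0 M ∩ Iio (g t)).indicator (fun _ => G' t) y‖
      ≤ 2 * (volume (Ioo (0:ℝ) M)).toReal := by
        apply norm_setIntegral_le_of_norm_le_const (C := 2) (by simp [Real.volume_Ioo]) hbound
    _ = 2 * M := by rw [hvol]

lemma tail_bound {φ φd : ℝ → ℝ} (hφ : ∀ t, HasDerivAt φ (φd t) t)
    (hφdc : Continuous φd) {a b lam : ℝ} (hab : a ≤ b) (hlam : 0 < lam)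
    (hlow : ∀ t ∈ Icc a b, lam ≤ |φd t|)
    (hmon : MonotoneOn φd (Icc a b) ∨ AntitoneOn φd (Icc a b)) :
    ‖∫ t in a..b, Complex.exp (Complex.I * (φ t : ℂ))‖ ≤ 2 / lam := by
  set G : ℝ → ℂ := fun t => Complex.exp (Complex.I * (φ t : ℂ)) with hGdef
  set G' : ℝ → ℂ := fun t => Complex.exp (Complex.I * (φ t : ℂ)) * (Complex.I * (φd t : ℂ))
    with hG'def
  have hG : ∀ t, HasDerivAt G (G' t) t := by
    intro t
    exact (((hφ t).ofReal_comp).const_mul Complex.I).cexp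
  have hφc : Continuous φ := by
    have : Differentiable ℝ φ := fun t => (hφ t).differentiableAt
    exact this.continuous
  have hG'c : Continuous G' := by
    apply Continuous.mul
    · exact (continuous_const.mul (Complex.continuous_ofReal.comp hφc)).cexp
    · exact continuous_const.mul (Complex.continuous_ofReal.comp hφdc)
  have hGb : ∀ t, ‖G t‖ ≤ 1 := by
    intro t
    simp [hGdef, Complex.norm_exp]
  -- sign constancy
  have hsgn : (∀ t ∈ Icc a b, 0 < φd t) ∨ (∀ t ∈ Icc a b, φd t < 0) := by
    by_contra h
    push_neg at h
    obtain ⟨⟨t1, ht1, ht1'⟩, ⟨t2, ht2, ht2'⟩⟩ := h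
    -- φd t1 ≤ 0 ≤ φd t2 (ht2' : ¬ φd t2 < 0 i.e. 0 ≤ φd t2)
    have h1 : φd t1 ≤ 0 := ht1'
    have h2 : 0 ≤ φd t2 := ht2'
    have : ∃ s ∈ Set.uIcc t1 t2, φd s = 0 := by
      have := intermediate_value_uIcc (a := t1) (b := t2) (f := φd) (hφdc.continuousOn)
      have h0 : (0:ℝ) ∈ Set.uIcc (φd t1) (φd t2) := Set.mem_uIcc.2 (Or.inl ⟨h1, h2⟩)
      obtain ⟨s, hs, hs'⟩ := this h0
      exact ⟨s, hs, hs'⟩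
    obtain ⟨s, hs, hs0⟩ := this
    have hsmem : s ∈ Icc a b := by
      exact Set.ordConnected_Icc.uIcc_subset ht1 ht2 hs
    have := hlow s hsmem
    rw [hs0] at this
    simp at this
    linarith
  set g : ℝ → ℝ := fun t => |φd t|⁻¹ with hgdef
  have hgm : Measurable g := (hφdc.abs.measurable).inv
  have habs : MonotoneOn (fun t => |φd t|) (Icc a b) ∨ AntitoneOn (fun t => |φd t|) (Icc a b) := by
    rcases hsgn with hp | hn
    · rcases hmon with hm | hm
      · left; intro x hx y hy hxy
        simp only
        rw [abs_of_pos (hp x hx), abs_of_pos (hp y hy)]; exact hm hx hy hxy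
      · right; intro x hx y hy hxy
        simp only
        rw [abs_of_pos (hp x hx), abs_of_pos (hp y hy)]; exact hm hx hy hxy
    · rcases hmon with hm | hm
      · right; intro x hx y hy hxy
        simp only
        rw [abs_of_neg (hn x hx), abs_of_neg (hn y hy)]
        have := hm hx hy hxy; linarith
      · left; intro x hx y hy hxy
        simp only
        rw [abs_of_neg (hn x hx), abs_of_neg (hn y hy)]
        have := hm hx hy hxy; linarith
  have hgpos : ∀ t ∈ Icc a b, 0 < |φd t| := fun t ht => lt_of_lt_of_le hlam (hlow t ht)
  have hqc : ∀ t1 t2 t, t1 ∈ Ioc a b → t2 ∈ Ioc a b → t1 ≤ t → t ≤ t2 →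
      min (g t1) (g t2) ≤ g t := by
    intro t1 t2 t h1 h2 h12 h22
    have h1' : t1 ∈ Icc a b := Ioc_subset_Icc_self h1
    have h2' : t2 ∈ Icc a b := Ioc_subset_Icc_self h2
    have ht' : t ∈ Icc a b := ⟨h1'.1.trans h12, h22.trans h2'.2⟩
    rcases habs with hm | hm
    · refine le_trans (min_le_right _ _) ?_
      exact inv_anti₀ (hgpos t ht') (hm ht' h2' h22)
    · refine le_trans (min_le_left _ _) ?_
      exact inv_anti₀ (hgpos t ht') (hm h1' ht' h12)
  have hg0 : ∀ t ∈ Ioc a b, g t ∈ Icc 0 lam⁻¹ := by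
    intro t ht
    exact ⟨inv_nonneg.2 (abs_nonneg _),
      inv_anti₀ hlam (hlow t (Ioc_subset_Icc_self ht))⟩
  have hid : ∃ E : ℂ, ‖E‖ = 1 ∧ ∀ t ∈ Ioc a b, G t = E • (g t • G' t) := by
    rcases hsgn with hp | hn
    · refine ⟨-Complex.I, by simp, ?_⟩
      intro t ht
      have h := hp t (Ioc_subset_Icc_self ht)
      have hne : (φd t : ℂ) ≠ 0 := by exact_mod_cast ne_of_gt h
      rw [hgdef]
      simp only [abs_of_pos h, real_smul, smul_eq_mul]
      push_cast
      field_simp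
      ring_nf
      simp only [hGdef, hG'def]
      linear_combination (cexp (I * ↑(φ t)) * ↑(φd t)) * Complex.I_sq
    · refine ⟨Complex.I, by simp, ?_⟩
      intro t ht
      have h := hn t (Ioc_subset_Icc_self ht)
      have hne : (φd t : ℂ) ≠ 0 := by exact_mod_cast ne_of_lt h
      rw [hgdef]
      simp only [abs_of_neg h, real_smul, smul_eq_mul]
      push_cast
      field_simp
      ring_nf
      simp only [hGdef, hG'def]
      linear_combination (cexp (I * ↑(φ t)) * ↑(φd t)) * Complex.I_sq
  obtain ⟨E, hE, hid⟩ := hid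
  rw [intervalIntegral.integral_of_le hab]
  calc ‖∫ t in Ioc a b, G t‖
      = ‖∫ t in Ioc a b, E • (g t • G' t)‖ := by
        rw [setIntegral_congr_fun measurableSet_Ioc hid]
    _ = ‖E • ∫ t in Ioc a b, g t • G' t‖ := by rw [integral_smul]
    _ = ‖∫ t in Ioc a b, g t • G' t‖ := by rw [norm_smul, hE, one_mul]
    _ ≤ 2 * lam⁻¹ := lemA hG hG'c hGb hgm hab (inv_nonneg.2 hlam.le) hg0 hqc
    _ = 2 / lam := by rw [div_eq_mul_inv]

lemma mono_aux {v : ℝ → ℝ} {s : Set ℝ} (h : MonotoneOn v s ∨ AntitoneOn v s) (k l : ℝ) :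
    MonotoneOn (fun t => k - l * v t) s ∨ AntitoneOn (fun t => k - l * v t) s := by
  rcases le_total 0 l with hl | hl <;> rcases h with hm | hm
  · right; intro x hx y hy hxy; have := hm hx hy hxy; simp only; nlinarith
  · left; intro x hx y hy hxy; have := hm hx hy hxy; simp only; nlinarith
  · left; intro x hx y hy hxy; have := hm hx hy hxy; simp only; nlinarith
  · right; intro x hx y hy hxy; have := hm hx hy hxy; simp only; nlinarith

/-- uniform convergence of the transfer integral H_u(k,·) on {|l| ≥ ε}. -/
theorem transfer_uniform_convergence
    (u : ℝ → ℝ) (hu : ContDiff ℝ 1 u)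
    (hmono : ∃ S T : ℝ,
      (MonotoneOn (deriv u) (Iic S) ∨ AntitoneOn (deriv u) (Iic S)) ∧
      (MonotoneOn (deriv u) (Ici T) ∨ AntitoneOn (deriv u) (Ici T)))
    (hproper_top : Tendsto (fun t => |deriv u t|) atTop atTop)
    (hproper_bot : Tendsto (fun t => |deriv u t|) atBot atTop)
    (ε : ℝ) (hε : 0 < ε) (k : ℝ) :
    ∃ H : ℝ → ℂ,
      TendstoUniformlyOn
        (fun (p : ℝ × ℝ) (l : ℝ) =>
          ∫ t in (-p.1)..p.2, Complex.exp (Complex.I * (k * t - l * u t)))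
        H (atTop ×ˢ atTop) {l : ℝ | ε ≤ |l|} := by
  obtain ⟨S0, T0, hmL, hmR⟩ := hmono
  have hud : ∀ t, HasDerivAt u (deriv u t) t :=
    fun t => ((hu.differentiable one_ne_zero) t).hasDerivAt
  have hudc : Continuous (deriv u) := hu.continuous_deriv le_rfl
  set F : ℝ × ℝ → ℝ → ℂ := fun p l =>
    ∫ t in (-p.1)..p.2, Complex.exp (Complex.I * (k * t - l * u t)) with hF
  set s : Set ℝ := {l : ℝ | ε ≤ |l|} with hs
  have hcont : ∀ l : ℝ, Continuous fun t : ℝ => Complex.exp (Complex.I * (k * t - l * u t)) := by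
    intro l
    apply Complex.continuous_exp.comp
    apply continuous_const.mul
    exact (continuous_const.mul Complex.continuous_ofReal).sub
      (continuous_const.mul (Complex.continuous_ofReal.comp hu.continuous))
  -- main tail estimate
  have main : ∀ δ : ℝ, 0 < δ → ∃ A : ℝ, 0 < A ∧ ∀ l ∈ s,
      (∀ a b : ℝ, A ≤ a → A ≤ b →
        ‖∫ t in a..b, Complex.exp (Complex.I * (k * t - l * u t))‖ ≤ δ) ∧
      (∀ a b : ℝ, a ≤ -A → b ≤ -A →
        ‖∫ t in a..b, Complex.exp (Complex.I * (k * t - l * u t))‖ ≤ δ) := by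
    intro δ hδ
    set lam := 2 / δ with hlamdef
    have hlam : 0 < lam := by positivity
    set r := (|k| + lam) / ε with hrdef
    obtain ⟨A1, hA1⟩ := eventually_atTop.1 (hproper_top.eventually_ge_atTop r)
    obtain ⟨A2, hA2⟩ := eventually_atBot.1 (hproper_bot.eventually_ge_atTop r)
    set A := max (max T0 A1) (max (max (-S0) (-A2)) 1) with hAdef
    have hA1' : A1 ≤ A := (le_max_right T0 A1).trans (le_max_left _ _)
    have hT0' : T0 ≤ A := (le_max_left T0 A1).trans (le_max_left _ _)
    have hS0' : -S0 ≤ A := ((le_max_left (-S0) (-A2)).trans (le_max_left _ 1)).trans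
      (le_max_right _ _)
    have hA2' : -A2 ≤ A := ((le_max_right (-S0) (-A2)).trans (le_max_left _ 1)).trans
      (le_max_right _ _)
    have hApos : 0 < A := lt_of_lt_of_le one_pos
      ((le_max_right _ 1).trans (le_max_right _ _))
    refine ⟨A, hApos, ?_⟩
    intro l hl
    have hl' : ε ≤ |l| := hl
    set φ : ℝ → ℝ := fun t => k * t - l * u t with hφdef
    set φd : ℝ → ℝ := fun t => k - l * deriv u t with hφddef
    have hφ : ∀ t, HasDerivAt φ (φd t) t := by
      intro t
      have h1 : HasDerivAt (fun t : ℝ => k * t) k t := by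
        simpa using (hasDerivAt_id t).const_mul k
      have h2 : HasDerivAt (fun t : ℝ => l * u t) (l * deriv u t) t := (hud t).const_mul l
      exact h1.sub h2
    have hφdc : Continuous φd := continuous_const.sub (continuous_const.mul hudc)
    have hrnn : 0 ≤ r := by
      rw [hrdef]
      positivity
    have hlow : ∀ t : ℝ, r ≤ |deriv u t| → lam ≤ |φd t| := by
      intro t ht
      have h1 : |k| + lam = ε * r := by
        rw [hrdef]
        field_simp
      have h2 : ε * r ≤ |l| * |deriv u t| :=
        mul_le_mul hl' ht hrnn (abs_nonneg l)
      have h3 := abs_sub_abs_le_abs_sub (l * deriv u t) k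
      have h4 : |l * deriv u t - k| = |φd t| := by
        rw [← abs_neg]
        congr 1
        simp only [hφddef]
        ring
      rw [abs_mul] at h3
      linarith
    have est : ∀ (a b : ℝ), a ≤ b →
        (MonotoneOn (deriv u) (Icc a b) ∨ AntitoneOn (deriv u) (Icc a b)) →
        (∀ t ∈ Icc a b, r ≤ |deriv u t|) →
        ‖∫ t in a..b, Complex.exp (Complex.I * (k * t - l * u t))‖ ≤ δ := by
      intro a b hab hm hr
      have h1 : ∀ t ∈ Icc a b, lam ≤ |φd t| := fun t ht => hlow t (hr t ht)
      have happ := tail_bound hφ hφdc hab hlam h1 (mono_aux hm k l)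
      have heq : EqOn (fun t : ℝ => Complex.exp (Complex.I * (k * t - l * u t)))
          (fun t : ℝ => Complex.exp (Complex.I * ((φ t : ℝ) : ℂ))) (Set.uIcc a b) := by
        intro t _
        simp only [hφdef]
        push_cast
        ring_nf
      rw [intervalIntegral.integral_congr heq]
      refine le_trans happ ?_
      rw [hlamdef]
      rw [div_div_eq_mul_div, mul_comm]
      field_simp
      exact le_rfl
    have estR : ∀ a b : ℝ, a ≤ b → A ≤ a →
        ‖∫ t in a..b, Complex.exp (Complex.I * (k * t - l * u t))‖ ≤ δ := by
      intro a b hab ha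
      have hsub : Icc a b ⊆ Ici T0 := fun x hx => le_trans (hT0'.trans ha) hx.1
      exact est a b hab (hmR.imp (fun h => h.mono hsub) (fun h => h.mono hsub))
        (fun t ht => hA1 t (le_trans (hA1'.trans ha) ht.1))
    have estL : ∀ a b : ℝ, a ≤ b → b ≤ -A →
        ‖∫ t in a..b, Complex.exp (Complex.I * (k * t - l * u t))‖ ≤ δ := by
      intro a b hab hb
      have hsub : Icc a b ⊆ Iic S0 := fun x hx => le_trans hx.2 (by linarith)
      exact est a b hab (hmL.imp (fun h => h.mono hsub) (fun h => h.mono hsub))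
        (fun t ht => hA2 t (le_trans ht.2 (by linarith)))
    constructor
    · intro a b ha hb
      rcases le_total a b with hab | hab
      · exact estR a b hab ha
      · rw [intervalIntegral.integral_symm, norm_neg]
        exact estR b a hab hb
    · intro a b ha hb
      rcases le_total a b with hab | hab
      · exact estL a b hab hb
      · rw [intervalIntegral.integral_symm, norm_neg]
        exact estL b a hab ha
  -- uniform Cauchy
  have hcauchy : UniformCauchySeqOn F (atTop ×ˢ atTop) s := by
    rw [prod_atTop_atTop_eq, Metric.uniformCauchySeqOn_iff]
    intro η hη
    obtain ⟨A, hApos, hA⟩ := main (η / 4) (by positivity)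
    refine ⟨(A, A), ?_⟩
    rintro ⟨m1, m2⟩ hm ⟨n1, n2⟩ hn l hl
    obtain ⟨hm1, hm2⟩ : A ≤ m1 ∧ A ≤ m2 := hm
    obtain ⟨hn1, hn2⟩ : A ≤ n1 ∧ A ≤ n2 := hn
    obtain ⟨hR, hL⟩ := hA l hl
    have hint : ∀ a b : ℝ, IntervalIntegrable
        (fun t => Complex.exp (Complex.I * (k * t - l * u t))) volume a b :=
      fun a b => (hcont l).intervalIntegrable a b
    have e1 : F (m1, m2) l - F (n1, n2) l
        = (∫ t in (-m1)..(-n1), Complex.exp (Complex.I * (k * t - l * u t)))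
          + ∫ t in n2..m2, Complex.exp (Complex.I * (k * t - l * u t)) := by
      have d1 := intervalIntegral.integral_add_adjacent_intervals
        (hint (-m1) (-n1)) (hint (-n1) m2)
      have d2 := intervalIntegral.integral_add_adjacent_intervals
        (hint (-n1) n2) (hint n2 m2)
      simp only [hF]
      rw [← d1, ← d2]
      ring
    rw [dist_eq_norm, e1]
    have b1 := hL (-m1) (-n1) (by linarith) (by linarith)
    have b2 := hR n2 m2 hn2 hm2
    calc ‖_ + _‖ ≤ η / 4 + η / 4 := le_trans (norm_add_le _ _) (by gcongr)
      _ < η := by linarith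
  have hptwise : ∀ l ∈ s, ∃ z : ℂ, Tendsto (fun p => F p l) (atTop ×ˢ atTop) (𝓝 z) := by
    intro l hl
    have hc := hcauchy.cauchy_map hl
    exact (CompleteSpace.complete hc).imp fun z hz => hz
  classical
  refine ⟨fun l => if h : l ∈ s then (hptwise l h).choose else 0,
    hcauchy.tendstoUniformlyOn_of_tendsto ?_⟩
  intro l hl
  simp only [dif_pos hl]
  exact (hptwise l hl).choose_spec
end

section
/- The set of Schwartz functions g on ℝ for which there exists ε > 0 with g(k) = 0 whenever |k| < ε is dense in L²(ℝ). -/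
open MeasureTheory Filter Set
open scoped ENNReal ContDiff
open Metric Function Convolution ContinuousLinearMap

/-- A smooth compactly supported function is a Schwartz function. -/
noncomputable def hcsToSchwartz (h : ℝ → ℂ) (hsm : ContDiff ℝ ∞ h)
    (hsupp : HasCompactSupport h) : SchwartzMap ℝ ℂ where
  toFun := h
  smooth' := hsm
  decay' := by
    intro k n
    have hd : HasCompactSupport (iteratedFDeriv ℝ n h) := hsupp.iteratedFDeriv n
    have hc : Continuous (iteratedFDeriv ℝ n h) := hsm.continuous_iteratedFDeriv (by exact_mod_cast le_top)
    have hF : HasCompactSupport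
        ((fun x : ℝ => ‖x‖ ^ k) * fun x => ‖iteratedFDeriv ℝ n h x‖) :=
      HasCompactSupport.mul_left (hd.comp_left (g := norm) norm_zero)
    obtain ⟨C, hC⟩ := hF.exists_bound_of_continuous
      (by exact ((continuous_norm.pow k).mul hc.norm))
    refine ⟨C, fun x => ?_⟩
    have := hC x
    simp only [Pi.mul_apply, Real.norm_eq_abs] at this
    calc ‖x‖ ^ k * ‖iteratedFDeriv ℝ n h x‖
        ≤ |‖x‖ ^ k * ‖iteratedFDeriv ℝ n h x‖| := le_abs_self _
      _ ≤ C := this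

/-- L² bound for a bounded function supported in a ball. -/
lemma eLpNorm_le_of_ball_bound {u : ℝ → ℂ} {r C : ℝ} (hC : 0 ≤ C)
    (hsupp : ∀ x, x ∉ closedBall (0 : ℝ) r → u x = 0)
    (hbound : ∀ x, ‖u x‖ ≤ C) :
    eLpNorm u 2 (volume : Measure ℝ) ≤
      ENNReal.ofReal C * volume (closedBall (0 : ℝ) r) ^ (1 / 2 : ℝ) := by
  have hmono : ∀ x, ‖u x‖ ≤ ‖(closedBall (0 : ℝ) r).indicator (fun _ => C) x‖ := by
    intro x
    by_cases hx : x ∈ closedBall (0 : ℝ) r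
    · simpa [hx, Real.norm_eq_abs, abs_of_nonneg hC] using hbound x
    · simp [hx, hsupp x hx]
  calc eLpNorm u 2 volume
      ≤ eLpNorm ((closedBall (0 : ℝ) r).indicator (fun _ => C)) 2 volume :=
        eLpNorm_mono hmono
    _ = ‖C‖₊ * volume (closedBall (0 : ℝ) r) ^ (1 / (2 : ℝ≥0∞).toReal) :=
        eLpNorm_indicator_const measurableSet_closedBall two_ne_zero ENNReal.ofNat_ne_top
    _ = ENNReal.ofReal C * volume (closedBall (0 : ℝ) r) ^ (1 / 2 : ℝ) := by
        rw [show (‖C‖₊ : ℝ≥0∞) = ENNReal.ofReal C from Real.enorm_eq_ofReal hC]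
        norm_num

/-- Schwartz functions vanishing on a neighbourhood of 0 are dense in L²(ℝ). -/
theorem schwartz_vanishing_near_zero_dense
    (f : ℝ → ℂ) (hf : MemLp f 2 (volume : Measure ℝ)) (δ : ℝ) (hδ : 0 < δ) :
    ∃ g : SchwartzMap ℝ ℂ, (∃ ε > 0, ∀ k : ℝ, |k| < ε → g k = 0) ∧
      eLpNorm (f - fun t => g t) 2 (volume : Measure ℝ) < ENNReal.ofReal δ := by
  classical
  -- Step 1: continuous compactly supported approximation
  obtain ⟨g₀, hg₀supp, hg₀close, hg₀cont, hg₀mem⟩ :=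
    hf.exists_hasCompactSupport_eLpNorm_sub_le (by norm_num : (2 : ℝ≥0∞) ≠ (⊤ : ℝ≥0∞))
      (ε := ENNReal.ofReal (δ / 4)) (ENNReal.ofReal_pos.2 (by positivity)).ne'
  -- Radius containing the support of g₀
  obtain ⟨R₀, hR₀⟩ := hg₀supp.isBounded.subset_closedBall (0 : ℝ)
  set R : ℝ := max R₀ 0 with hRdef
  have hR : tsupport g₀ ⊆ closedBall (0 : ℝ) R :=
    hR₀.trans (closedBall_subset_closedBall (le_max_left _ _))
  have hRnonneg : 0 ≤ R := le_max_right _ _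
  -- Volume factor
  set V : ℝ≥0∞ := volume (closedBall (0 : ℝ) (R + 1)) ^ (1 / 2 : ℝ) with hVdef
  have hVne : V ≠ ⊤ :=
    ENNReal.rpow_ne_top_of_nonneg (by norm_num) measure_closedBall_lt_top.ne
  -- choose ε' for the mollification error
  set ε' : ℝ := (δ / 4) / (V.toReal + 1) with hε'def
  have hVt : 0 ≤ V.toReal := ENNReal.toReal_nonneg
  have hε'pos : 0 < ε' := by positivity
  have hε'V : ENNReal.ofReal ε' * V ≤ ENNReal.ofReal (δ / 4) := by
    have h1 : V ≤ ENNReal.ofReal (V.toReal + 1) := by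
      calc V = ENNReal.ofReal V.toReal := (ENNReal.ofReal_toReal hVne).symm
        _ ≤ ENNReal.ofReal (V.toReal + 1) := ENNReal.ofReal_le_ofReal (by linarith)
    calc ENNReal.ofReal ε' * V ≤ ENNReal.ofReal ε' * ENNReal.ofReal (V.toReal + 1) :=
          mul_le_mul_right h1 _
      _ = ENNReal.ofReal (ε' * (V.toReal + 1)) :=
          (ENNReal.ofReal_mul hε'pos.le).symm
      _ = ENNReal.ofReal (δ / 4) := by
          rw [hε'def, div_mul_cancel₀]
          positivity
  -- uniform continuity of g₀
  have hgu : UniformContinuous g₀ := hg₀supp.uniformContinuous_of_continuous hg₀cont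
  obtain ⟨d, hdpos, hd⟩ := Metric.uniformContinuous_iff.1 hgu ε' hε'pos
  set r : ℝ := min d 1 with hrdef
  have hrpos : 0 < r := lt_min hdpos one_pos
  have hrle1 : r ≤ 1 := min_le_right _ _
  set φ : ContDiffBump (0 : ℝ) := ⟨r / 2, r, by positivity, by linarith⟩ with hφdef
  set h : ℝ → ℂ := φ.normed volume ⋆[lsmul ℝ ℝ, volume] g₀ with hhdef
  have hg₀loc : LocallyIntegrable g₀ volume := hg₀cont.locallyIntegrable
  have hhsm : ContDiff ℝ ∞ h :=
    HasCompactSupport.contDiff_convolution_left _ φ.hasCompactSupport_normed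
      φ.contDiff_normed hg₀loc
  have hhsupp : HasCompactSupport h :=
    HasCompactSupport.convolution (L := lsmul ℝ ℝ) (μ := volume) φ.hasCompactSupport_normed hg₀supp
  have hhcont : Continuous h := hhsm.continuous
  -- pointwise mollification bound
  have hclose : ∀ x, ‖h x - g₀ x‖ ≤ ε' := by
    intro x
    have := ContDiffBump.dist_normed_convolution_le (μ := volume) (φ := φ) (x₀ := x)
      hg₀cont.aestronglyMeasurable (fun y hy => by
        have : dist y x < d := lt_of_lt_of_le (mem_ball.1 hy) (min_le_left _ _)
        exact (hd this).le)
    simpa [dist_eq_norm, hhdef] using this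
  -- support of h - g₀
  have hsupp1 : ∀ x, x ∉ closedBall (0 : ℝ) (R + 1) → h x - g₀ x = 0 := by
    intro x hx
    have hxnorm : R + 1 < ‖x‖ := by
      simpa [Metric.mem_closedBall, Real.dist_eq, abs_lt, Real.norm_eq_abs, not_le]
        using lt_of_not_ge (fun hle => hx (by simpa [Metric.mem_closedBall, Real.dist_eq,
          Real.norm_eq_abs] using hle))
    have hg₀x : g₀ x = 0 := by
      apply image_eq_zero_of_notMem_tsupport
      intro hmem
      have := hR hmem
      simp only [Metric.mem_closedBall, Real.dist_eq, sub_zero] at this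
      have : ‖x‖ ≤ R := by simpa [Real.norm_eq_abs] using this
      linarith
    have hhx : h x = 0 := by
      by_contra hne
      have hxsupp : x ∈ support h := hne
      have := support_convolution_subset (lsmul ℝ ℝ) (μ := volume)
        (f := φ.normed volume) (g := g₀) hxsupp
      obtain ⟨a, ha, b, hb, rfl⟩ := this
      have ha' : ‖a‖ < r := by
        rw [ContDiffBump.support_normed_eq] at ha
        simpa [Metric.mem_ball, Real.dist_eq, Real.norm_eq_abs] using ha
      have hb' : ‖b‖ ≤ R := by
        have := hR (subset_tsupport _ hb)
        simpa [Metric.mem_closedBall, Real.dist_eq, Real.norm_eq_abs] using this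
      have : ‖a + b‖ ≤ ‖a‖ + ‖b‖ := norm_add_le _ _
      linarith [hxnorm]
    simp [hg₀x, hhx]
  have hstep2 : eLpNorm (h - g₀) 2 volume ≤ ENNReal.ofReal (δ / 4) := by
    calc eLpNorm (h - g₀) 2 volume
        ≤ ENNReal.ofReal ε' * volume (closedBall (0 : ℝ) (R + 1)) ^ (1 / 2 : ℝ) :=
          eLpNorm_le_of_ball_bound hε'pos.le
            (fun x hx => by simpa using hsupp1 x hx)
            (fun x => by simpa using hclose x)
      _ ≤ ENNReal.ofReal (δ / 4) := hε'V
  -- Step 3: bound for h and cutoff near zero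
  obtain ⟨M₀, hM₀⟩ := hhsupp.exists_bound_of_continuous hhcont
  set M : ℝ := max M₀ 0 with hMdef
  have hM : ∀ x, ‖h x‖ ≤ M := fun x => (hM₀ x).trans (le_max_left _ _)
  have hMnonneg : 0 ≤ M := le_max_right _ _
  set η : ℝ := (δ / (4 * (M + 1))) ^ 2 / 2 with hηdef
  have hηpos : 0 < η := by positivity
  set ψ : ContDiffBump (0 : ℝ) := ⟨η / 2, η, by positivity, by linarith⟩ with hψdef
  set gf : ℝ → ℂ := fun x => (1 - ψ x) • h x with hgfdef
  have hgfsm : ContDiff ℝ ∞ gf := (contDiff_const.sub ψ.contDiff).smul hhsm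
  have hgfsupp : HasCompactSupport gf := by
    apply hhsupp.mono
    intro x hx
    simp only [hgfdef, mem_support, ne_eq, not_not] at hx ⊢
    contrapose! hx
    simp [hx]
  have hdiff : ∀ x, h x - gf x = ψ x • h x := by
    intro x
    show h x - (1 - ψ x) • h x = ψ x • h x
    rw [sub_smul, one_smul, sub_sub_cancel]
  have hstep3 : eLpNorm (h - gf) 2 volume ≤ ENNReal.ofReal (δ / 4) := by
    have hb1 : ∀ x, x ∉ closedBall (0 : ℝ) η → (h - gf) x = 0 := by
      intro x hx
      have : ψ x = 0 := by
        apply ψ.zero_of_le_dist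
        simpa [Metric.mem_closedBall, not_le] using (le_of_not_gt (fun hlt => hx
          (by simpa [Metric.mem_closedBall] using hlt.le)))
      simp [Pi.sub_apply, hdiff, this]
    have hb2 : ∀ x, ‖(h - gf) x‖ ≤ M := by
      intro x
      rw [Pi.sub_apply, hdiff]
      rw [norm_smul]
      calc ‖ψ x‖ * ‖h x‖ ≤ 1 * M := by
            apply mul_le_mul _ (hM x) (norm_nonneg _) zero_le_one
            rw [Real.norm_eq_abs, abs_of_nonneg ψ.nonneg]
            exact ψ.le_one
        _ = M := one_mul M
    calc eLpNorm (h - gf) 2 volume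
        ≤ ENNReal.ofReal M * volume (closedBall (0 : ℝ) η) ^ (1 / 2 : ℝ) :=
          eLpNorm_le_of_ball_bound hMnonneg hb1 hb2
      _ = ENNReal.ofReal (M * Real.sqrt (2 * η)) := by
          rw [Real.volume_closedBall, ENNReal.ofReal_rpow_of_pos (by positivity),
            ← ENNReal.ofReal_mul hMnonneg, ← Real.sqrt_eq_rpow]
      _ ≤ ENNReal.ofReal (δ / 4) := by
          apply ENNReal.ofReal_le_ofReal
          have h2η : 2 * η = (δ / (4 * (M + 1))) ^ 2 := by
            rw [hηdef]; ring
          rw [h2η, Real.sqrt_sq (by positivity)]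
          have key : (M + 1) * (δ / (4 * (M + 1))) = δ / 4 := by
            field_simp
          calc M * (δ / (4 * (M + 1))) ≤ (M + 1) * (δ / (4 * (M + 1))) := by
                apply mul_le_mul_of_nonneg_right (by linarith) (by positivity)
            _ = δ / 4 := key
  -- assemble the Schwartz function
  refine ⟨hcsToSchwartz gf hgfsm hgfsupp, ⟨η / 2, by positivity, fun k hk => ?_⟩, ?_⟩
  · have hψk : ψ k = 1 := ψ.one_of_mem_closedBall
      (by simpa [Metric.mem_closedBall, Real.dist_eq] using hk.le)
    show gf k = 0
    simp [hgfdef, hψk]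
  · have hcoe : (fun t => (hcsToSchwartz gf hgfsm hgfsupp) t) = gf := rfl
    rw [hcoe]
    have meas_f : AEStronglyMeasurable f volume := hf.aestronglyMeasurable
    have meas_g₀ : AEStronglyMeasurable g₀ volume := hg₀cont.aestronglyMeasurable
    have meas_h : AEStronglyMeasurable h volume := hhcont.aestronglyMeasurable
    have meas_gf : AEStronglyMeasurable gf volume := hgfsm.continuous.aestronglyMeasurable
    have hdecomp : f - gf = (f - g₀) + ((g₀ - h) + (h - gf)) := by
      funext x; simp only [Pi.sub_apply, Pi.add_apply]; ring
    have hg₀h : eLpNorm (g₀ - h) 2 volume ≤ ENNReal.ofReal (δ / 4) := by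
      have : g₀ - h = -(h - g₀) := by funext x; simp
      rw [this, eLpNorm_neg]
      exact hstep2
    calc eLpNorm (f - gf) 2 volume
        = eLpNorm ((f - g₀) + ((g₀ - h) + (h - gf))) 2 volume := by rw [hdecomp]
      _ ≤ eLpNorm (f - g₀) 2 volume + eLpNorm ((g₀ - h) + (h - gf)) 2 volume :=
          eLpNorm_add_le (meas_f.sub meas_g₀)
            ((meas_g₀.sub meas_h).add (meas_h.sub meas_gf)) one_le_two
      _ ≤ eLpNorm (f - g₀) 2 volume +
            (eLpNorm (g₀ - h) 2 volume + eLpNorm (h - gf) 2 volume) := by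
          gcongr
          exact eLpNorm_add_le (meas_g₀.sub meas_h) (meas_h.sub meas_gf) one_le_two
      _ ≤ ENNReal.ofReal (δ / 4) + (ENNReal.ofReal (δ / 4) + ENNReal.ofReal (δ / 4)) := by
          gcongr
      _ = ENNReal.ofReal (δ / 4 + (δ / 4 + δ / 4)) := by
          rw [← ENNReal.ofReal_add (by positivity) (by positivity),
            ← ENNReal.ofReal_add (by positivity) (by positivity)]
      _ < ENNReal.ofReal δ := by
          apply ENNReal.ofReal_lt_ofReal_iff hδ |>.2
          linarith
end
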